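/- Let ω ∈ ℝ^b be such that 1, ω_1,...,ω_b are linearly independent over ℚ. Let ξ = (ν, η) and ξ' = (ν', η') be elements of ℤ^b × ℤ^2 that are linearly independent over ℝ (as vectors in ℝ^{b+2}), with η and η' spanning a space of dimension exactly 1 (i.e., η, η' not both zero and linearly dependent). Then the 2×2 matrix T₊₊ with entries T₊₊[1,1] = (ν·ω)² + |η|², T₊₊[1,2] = T₊₊[2,1] = (ν·ω)(ν'·ω) + η·η', T₊₊[2,2] = (ν'·ω)² + |η'|² has nonzero determinant. -/

import Mathlib

/-- If `1, ω_1, ..., ω_b` are `ℚ`-linearly independent and `m` is an integer vector with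
`∑ m i * ω i = 0`, then `m = 0`. -/
lemma int_comb_eq_zero (b : ℕ) (ω : Fin b → ℝ)
    (hindep : LinearIndependent ℚ (Fin.cons (1 : ℝ) ω : Fin (b + 1) → ℝ))
    (m : Fin b → ℤ) (hm : ∑ i, (m i : ℝ) * ω i = 0) : m = 0 := by
  rw [Fintype.linearIndependent_iff] at hindep
  have h := hindep (Fin.cons (0 : ℚ) (fun i => (m i : ℚ)) : Fin (b + 1) → ℚ)
  have hsum : ∑ i, (Fin.cons (0 : ℚ) (fun i => (m i : ℚ)) : Fin (b + 1) → ℚ) i •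
      (Fin.cons (1 : ℝ) ω : Fin (b + 1) → ℝ) i = 0 := by
    rw [Fin.sum_univ_succ]
    simp only [Fin.cons_zero, Fin.cons_succ, zero_smul, zero_add]
    rw [← hm]
    refine Finset.sum_congr rfl fun i _ => ?_
    rw [Rat.smul_def]
    push_cast
    ring
  have h2 := h hsum
  funext j
  have := h2 j.succ
  simp only [Fin.cons_succ] at this
  exact_mod_cast this

theorem stmt3 (b : ℕ) (ω : Fin b → ℝ)
    (hindep : LinearIndependent ℚ (Fin.cons (1 : ℝ) ω : Fin (b + 1) → ℝ))
    (ν ν' : Fin b → ℤ) (η η' : Fin 2 → ℤ)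
    (hξ : LinearIndependent ℝ
      ![Sum.elim (fun i => (ν i : ℝ)) (fun i => (η i : ℝ)),
        Sum.elim (fun i => (ν' i : ℝ)) (fun i => (η' i : ℝ))])
    (hηdep : ¬ LinearIndependent ℝ ![(fun i => (η i : ℝ)), (fun i => (η' i : ℝ))])
    (hηne : η ≠ 0 ∨ η' ≠ 0) :
    Matrix.det
      !![(∑ i, (ν i : ℝ) * ω i) ^ 2 + (∑ i, (η i : ℝ) ^ 2),
         (∑ i, (ν i : ℝ) * ω i) * (∑ i, (ν' i : ℝ) * ω i) + (∑ i, (η i : ℝ) * (η' i : ℝ));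
         (∑ i, (ν' i : ℝ) * ω i) * (∑ i, (ν i : ℝ) * ω i) + (∑ i, (η' i : ℝ) * (η i : ℝ)),
         (∑ i, (ν' i : ℝ) * ω i) ^ 2 + (∑ i, (η' i : ℝ) ^ 2)] ≠ 0 := by
  intro hdet
  rw [Matrix.det_fin_two_of] at hdet
  set x := ∑ i, (ν i : ℝ) * ω i with hx
  set y := ∑ i, (ν' i : ℝ) * ω i with hy
  rw [Fin.sum_univ_two, Fin.sum_univ_two, Fin.sum_univ_two, Fin.sum_univ_two] at hdet
  set p0 := (η 0 : ℝ); set p1 := (η 1 : ℝ); set q0 := (η' 0 : ℝ); set q1 := (η' 1 : ℝ)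
  -- Lagrange identity: the determinant is a sum of three squares
  have h1 : x * q0 - y * p0 = 0 := by
    nlinarith [sq_nonneg (x * q0 - y * p0), sq_nonneg (x * q1 - y * p1),
      sq_nonneg (p0 * q1 - p1 * q0)]
  have h2 : x * q1 - y * p1 = 0 := by
    nlinarith [sq_nonneg (x * q0 - y * p0), sq_nonneg (x * q1 - y * p1),
      sq_nonneg (p0 * q1 - p1 * q0)]
  have h3 : p0 * q1 - p1 * q0 = 0 := by
    nlinarith [sq_nonneg (x * q0 - y * p0), sq_nonneg (x * q1 - y * p1),
      sq_nonneg (p0 * q1 - p1 * q0)]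
  have hmix : ∀ i : Fin 2, (η i : ℝ) * y = (η' i : ℝ) * x := by
    intro i; fin_cases i
    · show p0 * y = q0 * x; linarith
    · show p1 * y = q1 * x; linarith
  have hqq : ∀ i j : Fin 2, (η i : ℝ) * (η' j : ℝ) = (η' i : ℝ) * (η j : ℝ) := by
    intro i j; fin_cases i <;> fin_cases j
    · exact mul_comm _ _
    · show p0 * q1 = q0 * p1; linarith
    · show p1 * q0 = q1 * p0; linarith
    · exact mul_comm _ _
  -- pick a coordinate where η or η' is nonzero
  obtain ⟨i, hi⟩ : ∃ i : Fin 2, (η i ≠ 0 ∨ η' i ≠ 0) := by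
    rcases hηne with h | h
    · obtain ⟨i, hi⟩ := Function.ne_iff.1 h; exact ⟨i, Or.inl hi⟩
    · obtain ⟨i, hi⟩ := Function.ne_iff.1 h; exact ⟨i, Or.inr hi⟩
  -- the integer vector η_i ν' - η'_i ν pairs to zero with ω, hence vanishes
  have hm0 : (fun j => η i * ν' j - η' i * ν j) = 0 := by
    apply int_comb_eq_zero b ω hindep
    have : ∑ j, ((η i * ν' j - η' i * ν j : ℤ) : ℝ) * ω j
        = (η i : ℝ) * y - (η' i : ℝ) * x := by
      rw [hx, hy, Finset.mul_sum, Finset.mul_sum, ← Finset.sum_sub_distrib]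
      refine Finset.sum_congr rfl fun j _ => ?_
      push_cast; ring
    rw [this, hmix i, sub_self]
  have hnu : ∀ j, (η i : ℝ) * (ν' j : ℝ) = (η' i : ℝ) * (ν j : ℝ) := by
    intro j
    have := congrFun hm0 j
    simp only [Pi.zero_apply, sub_eq_zero] at this
    exact_mod_cast this
  -- now build a nontrivial linear relation between ξ and ξ'
  rw [Fintype.linearIndependent_iff] at hξ
  have hrel := hξ ![-(η' i : ℝ), (η i : ℝ)]
  have hz : ∑ k, (![-(η' i : ℝ), (η i : ℝ)]) k •
      (![Sum.elim (fun j => (ν j : ℝ)) (fun j => (η j : ℝ)),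
        Sum.elim (fun j => (ν' j : ℝ)) (fun j => (η' j : ℝ))]) k = 0 := by
    rw [Fin.sum_univ_two]
    funext k
    cases k with
    | inl j =>
      simp only [Matrix.cons_val_zero, Matrix.cons_val_one, Matrix.head_cons,
        Pi.add_apply, Pi.smul_apply, Sum.elim_inl, smul_eq_mul, Pi.zero_apply]
      have := hnu j; nlinarith [hnu j]
    | inr j =>
      simp only [Matrix.cons_val_zero, Matrix.cons_val_one, Matrix.head_cons,
        Pi.add_apply, Pi.smul_apply, Sum.elim_inr, smul_eq_mul, Pi.zero_apply]
      have := hqq i j; nlinarith [hqq i j]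
  have hall := hrel hz
  rcases hi with hi | hi
  · have := hall 1
    simp only [Matrix.cons_val_one, Matrix.head_cons, Matrix.cons_val_zero] at this
    exact hi (by exact_mod_cast this)
  · have := hall 0
    simp only [Matrix.cons_val_zero, neg_eq_zero] at this
    exact hi (by exact_mod_cast this)
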